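/- The topological stable rank of the Bohl algebra B with respect to the topology of uniform convergence on ℝ is infinite. Precisely: for every positive integer n, the set of unimodular n-tuples of B is not dense in B^n for the sup-norm; i.e., there exist f_1, …, f_n ∈ B and ε > 0 such that for every unimodular n-tuple (g_1, …, g_n) of B, one has sup_{t ∈ ℝ} |f_j(t) − g_j(t)| ≥ ε for some j ∈ {1, …, n}. -/

import Mathlib

open Complex
open scoped ENNReal NNReal

noncomputable section

/-- The Bohl algebra: the subalgebra of functions `ℝ → ℂ` (pointwise operations)
spanned over `ℂ` by the functions `t ↦ t^k * exp (λ * t)`, `k ∈ ℕ`, `λ ∈ ℂ`. -/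
def Bohl : Subalgebra ℂ (ℝ → ℂ) :=
  Algebra.adjoin ℂ
    {g : ℝ → ℂ | ∃ (k : ℕ) (l : ℂ), g = fun t : ℝ => (t : ℂ) ^ k * Complex.exp (l * t)}

open Polynomial
set_option linter.unusedVariables false


/-- Sum of exponential–polynomial terms over a finite set of frequencies. -/
def expP (Λ : Finset ℂ) (p : ℂ → ℂ[X]) (t : ℝ) : ℂ :=
  ∑ l ∈ Λ, (p l).eval (t : ℂ) * Complex.exp (l * t)

/-- The finite-difference operator on polynomial coefficients. -/
def Tq (s : ℝ) (a ν : ℂ) (p : ℂ[X]) : ℂ[X] :=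
  C (Complex.exp (ν * (s : ℂ))) * p.comp (X + C (s : ℂ)) - C a * p

lemma Tq_zero (s : ℝ) (a ν : ℂ) : Tq s a ν 0 = 0 := by
  simp [Tq]

lemma Tq_eval (s : ℝ) (a ν : ℂ) (p : ℂ[X]) (t : ℝ) :
    (Tq s a ν p).eval (t : ℂ) * Complex.exp (ν * t)
      = p.eval (((t + s : ℝ) : ℂ)) * Complex.exp (ν * ((t + s : ℝ) : ℂ))
        - a * (p.eval (t : ℂ) * Complex.exp (ν * t)) := by
  have h1 : ((t + s : ℝ) : ℂ) = (t : ℂ) + (s : ℂ) := by push_cast; ring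
  have h2 : Complex.exp (ν * ((t : ℂ) + (s : ℂ))) =
      Complex.exp (ν * t) * Complex.exp (ν * s) := by
    rw [mul_add, Complex.exp_add]
  simp only [Tq, eval_sub, eval_mul, eval_C, eval_comp, eval_add, eval_X, h1, h2]
  ring

lemma natDegree_comp_linear (p : ℂ[X]) (s : ℂ) :
    (p.comp (X + C s)).natDegree = p.natDegree := by
  rw [natDegree_comp, natDegree_X_add_C, mul_one]

lemma leadingCoeff_comp_linear (p : ℂ[X]) (s : ℂ) :
    (p.comp (X + C s)).leadingCoeff = p.leadingCoeff := by
  rw [leadingCoeff_comp (by rw [natDegree_X_add_C]; exact one_ne_zero)]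
  simp [(monic_X_add_C s).leadingCoeff]

lemma comp_linear_ne_zero {p : ℂ[X]} (hp : p ≠ 0) (s : ℂ) : p.comp (X + C s) ≠ 0 := by
  intro h
  apply hp
  have := leadingCoeff_comp_linear p s
  rw [h, leadingCoeff_zero] at this
  exact leadingCoeff_eq_zero.mp this.symm

/-- When `a ≠ exp (ν s)`, the operator preserves degree and nonvanishing. -/
lemma Tq_ne (s : ℝ) (a ν : ℂ) (p : ℂ[X]) (ha : a ≠ Complex.exp (ν * (s : ℂ))) :
    (Tq s a ν p).natDegree = p.natDegree ∧ (p ≠ 0 → Tq s a ν p ≠ 0) := by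
  by_cases hp : p = 0
  · subst hp; simp [Tq_zero]
  · set d := p.natDegree with hd
    have hcffcomp : (p.comp (X + C (s:ℂ))).coeff d = p.leadingCoeff := by
      have h1 : (p.comp (X + C (s:ℂ))).natDegree = d := natDegree_comp_linear p _
      have := coeff_natDegree (p := p.comp (X + C (s:ℂ)))
      rw [h1] at this
      rw [this, leadingCoeff_comp_linear]
    have hcoeff : (Tq s a ν p).coeff d
        = (Complex.exp (ν * (s:ℂ)) - a) * p.leadingCoeff := by
      simp only [Tq, coeff_sub, coeff_C_mul, hcffcomp]
      rw [coeff_natDegree]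
      ring
    have hne : (Tq s a ν p).coeff d ≠ 0 := by
      rw [hcoeff]
      exact mul_ne_zero (sub_ne_zero.mpr (Ne.symm ha)) (leadingCoeff_ne_zero.mpr hp)
    have hTne : Tq s a ν p ≠ 0 := fun h => hne (by rw [h]; simp)
    have hle : (Tq s a ν p).natDegree ≤ d := by
      refine le_trans (natDegree_sub_le _ _) ?_
      refine max_le (le_trans (natDegree_C_mul_le _ _) ?_) (le_trans (natDegree_C_mul_le _ _) le_rfl)
      rw [natDegree_comp_linear]
    exact ⟨le_antisymm hle (le_natDegree_of_ne_zero hne), fun _ => hTne⟩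

/-- When `a = exp (ν s)`, the operator strictly lowers degree (or kills). -/
lemma Tq_self (s : ℝ) (ν : ℂ) (p : ℂ[X]) (hp : p ≠ 0) :
    Tq s (Complex.exp (ν * (s : ℂ))) ν p = 0 ∨
      (Tq s (Complex.exp (ν * (s : ℂ))) ν p).natDegree < p.natDegree := by
  have hfac : Tq s (Complex.exp (ν * (s : ℂ))) ν p
      = C (Complex.exp (ν * (s:ℂ))) * (p.comp (X + C (s:ℂ)) - p) := by
    rw [Tq, mul_sub]
  by_cases hc : p.comp (X + C (s:ℂ)) - p = 0
  · left; rw [hfac, hc, mul_zero]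
  · right
    have hcompne : p.comp (X + C (s:ℂ)) ≠ 0 := comp_linear_ne_zero hp _
    have hdeg : (p.comp (X + C (s:ℂ))).degree = p.degree := by
      rw [degree_eq_natDegree hcompne, degree_eq_natDegree hp, natDegree_comp_linear]
    have hlt : (p.comp (X + C (s:ℂ)) - p).degree < p.degree := by
      have := degree_sub_lt hdeg hcompne (leadingCoeff_comp_linear p _)
      rwa [hdeg] at this
    have hlt' : (p.comp (X + C (s:ℂ)) - p).natDegree < p.natDegree :=
      natDegree_lt_natDegree hc hlt
    rw [hfac, natDegree_C_mul (Complex.exp_ne_zero _)]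
    exact hlt'

lemma expP_T (Λ : Finset ℂ) (p : ℂ → ℂ[X]) (s : ℝ) (a : ℂ) (t : ℝ) :
    expP Λ (fun l => Tq s a l (p l)) t = expP Λ p (t + s) - a * expP Λ p t := by
  unfold expP
  rw [Finset.mul_sum, ← Finset.sum_sub_distrib]
  exact Finset.sum_congr rfl fun l _ => Tq_eval s a l (p l) t


lemma exists_good_s (Λ : Finset ℂ) (l₁ : ℂ) :
    ∃ s : ℝ, ∀ l ∈ Λ, l ≠ l₁ → Complex.exp (l * (s:ℂ)) ≠ Complex.exp (l₁ * (s:ℂ)) := by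
  classical
  have hcount : ∀ l : ℂ, l ≠ l₁ →
      Set.Countable {s : ℝ | Complex.exp (l * (s:ℂ)) = Complex.exp (l₁ * (s:ℂ))} := by
    intro l hne
    have hsub : {s : ℝ | Complex.exp (l * (s:ℂ)) = Complex.exp (l₁ * (s:ℂ))} ⊆
        ⋃ k : ℤ, {s : ℝ | (l - l₁) * (s:ℂ) = k * (2 * Real.pi * Complex.I)} := by
      intro s hs
      rw [Set.mem_setOf_eq, Complex.exp_eq_exp_iff_exists_int] at hs
      obtain ⟨k, hk⟩ := hs
      refine Set.mem_iUnion.2 ⟨k, ?_⟩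
      rw [Set.mem_setOf_eq, sub_mul]
      linear_combination hk
    refine Set.Countable.mono hsub (Set.countable_iUnion fun k => Set.Subsingleton.countable ?_)
    intro s hs s' hs'
    rw [Set.mem_setOf_eq] at hs hs'
    have h2 : (l - l₁) * (s:ℂ) = (l - l₁) * (s':ℂ) := hs.trans hs'.symm
    have h3 : (s:ℂ) = (s':ℂ) := mul_left_cancel₀ (sub_ne_zero.mpr hne) h2
    exact_mod_cast h3
  by_contra hno
  push_neg at hno
  have hbig : (Set.univ : Set ℝ) ⊆
      ⋃ l ∈ (↑(Λ.erase l₁) : Set ℂ),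
        {s : ℝ | Complex.exp (l * (s:ℂ)) = Complex.exp (l₁ * (s:ℂ))} := by
    intro s _
    obtain ⟨l, hl, hlne, heq⟩ := hno s
    exact Set.mem_biUnion (Finset.mem_coe.mpr (Finset.mem_erase.mpr ⟨hlne, hl⟩)) heq
  have : (Set.univ : Set ℝ).Countable := by
    refine Set.Countable.mono hbig ?_
    refine Set.Countable.biUnion (Finset.countable_toSet _) ?_
    intro l hl
    rw [Finset.mem_coe, Finset.mem_erase] at hl
    exact hcount l hl.1
  exact Cardinal.not_countable_real this

/-- Weight of a polynomial for the induction measure. -/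
def wt (p : ℂ[X]) : ℕ := if p = 0 then 0 else p.natDegree + 1

lemma wt_zero : wt 0 = 0 := by simp [wt]

lemma wt_pos {p : ℂ[X]} (hp : p ≠ 0) : 0 < wt p := by simp [wt, hp]

lemma isolate_base (Λ : Finset ℂ) (p : ℂ → ℂ[X]) (l₀ : ℂ) (hl₀ : l₀ ∈ Λ)
    (hall : ∀ l ∈ Λ.erase l₀, p l = 0) :
    ∃ (q : ℂ[X]) (Cc : ℝ), 0 ≤ Cc ∧ (q = 0 ↔ p l₀ = 0) ∧
      ∀ M : ℝ, (∀ t : ℝ, ‖expP Λ p t‖ ≤ M) →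
        ∀ t : ℝ, ‖q.eval (t:ℂ) * Complex.exp (l₀ * t)‖ ≤ Cc * M := by
  refine ⟨p l₀, 1, zero_le_one, Iff.rfl, ?_⟩
  intro M hM t
  have hsingle : expP Λ p t = (p l₀).eval (t:ℂ) * Complex.exp (l₀ * t) := by
    rw [expP]
    apply Finset.sum_eq_single_of_mem l₀ hl₀
    intro b hb hbne
    rw [hall b (Finset.mem_erase.mpr ⟨hbne, hb⟩)]
    simp
  have h := hM t
  rw [hsingle] at h
  linarith

lemma isolate (N : ℕ) : ∀ (Λ : Finset ℂ) (p : ℂ → ℂ[X]) (l₀ : ℂ), l₀ ∈ Λ →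
    (∑ l ∈ Λ.erase l₀, wt (p l)) ≤ N →
    ∃ (q : ℂ[X]) (Cc : ℝ), 0 ≤ Cc ∧ (q = 0 ↔ p l₀ = 0) ∧
      ∀ M : ℝ, (∀ t : ℝ, ‖expP Λ p t‖ ≤ M) →
        ∀ t : ℝ, ‖q.eval (t:ℂ) * Complex.exp (l₀ * t)‖ ≤ Cc * M := by
  induction N with
  | zero =>
    intro Λ p l₀ hl₀ hsum
    refine isolate_base Λ p l₀ hl₀ ?_
    intro l hl
    by_contra hne
    have h1 : 0 < ∑ l ∈ Λ.erase l₀, wt (p l) :=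
      Finset.sum_pos' (fun _ _ => Nat.zero_le _) ⟨l, hl, wt_pos hne⟩
    omega
  | succ N ih =>
    intro Λ p l₀ hl₀ hsum
    by_cases hall : ∀ l ∈ Λ.erase l₀, p l = 0
    · exact isolate_base Λ p l₀ hl₀ hall
    · push_neg at hall
      obtain ⟨l₁, hl₁, hp₁⟩ := hall
      obtain ⟨s, hs⟩ := exists_good_s Λ l₁
      set a := Complex.exp (l₁ * (s:ℂ)) with ha_def
      set p' := fun l => Tq s a l (p l) with hp'_def
      have hl₁Λ : l₁ ∈ Λ := Finset.mem_of_mem_erase hl₁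
      have hl₁ne : l₁ ≠ l₀ := Finset.ne_of_mem_erase hl₁
      -- weights
      have hwle : ∀ l ∈ Λ.erase l₀, wt (p' l) ≤ wt (p l) := by
        intro l hl
        by_cases hll : l = l₁
        · subst hll
          rcases Tq_self s l (p l) hp₁ with h0 | hlt
          · have h0' : p' l = 0 := by
              rw [show p' l = Tq s a l (p l) from rfl, ha_def]; exact h0
            rw [h0', wt_zero]; exact Nat.zero_le _
          · have hlt' : (p' l).natDegree < (p l).natDegree := by
              rw [show p' l = Tq s a l (p l) from rfl, ha_def]; exact hlt
            have : wt (p' l) ≤ (p' l).natDegree + 1 := by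
              by_cases hz : p' l = 0
              · simp [wt, hz]
              · simp [wt, hz]
            have h2 : wt (p l) = (p l).natDegree + 1 := by simp [wt, hp₁]
            omega
        · have hane : a ≠ Complex.exp (l * (s:ℂ)) :=
            (hs l (Finset.mem_of_mem_erase hl) hll).symm
          by_cases hz : p l = 0
          · rw [hp'_def]; simp only [hz, Tq_zero, wt_zero]; exact Nat.zero_le _
          · obtain ⟨hdeq, hnz⟩ := Tq_ne s a l (p l) hane
            have := hnz hz
            simp [wt, hz, hp'_def, this, hdeq]
      have hwlt : wt (p' l₁) < wt (p l₁) := by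
        rcases Tq_self s l₁ (p l₁) hp₁ with h0 | hlt
        · have h0' : p' l₁ = 0 := by
            rw [show p' l₁ = Tq s a l₁ (p l₁) from rfl, ha_def]; exact h0
          rw [h0', wt_zero]; exact wt_pos hp₁
        · have hlt' : (p' l₁).natDegree < (p l₁).natDegree := by
            rw [show p' l₁ = Tq s a l₁ (p l₁) from rfl, ha_def]; exact hlt
          have h2 : wt (p l₁) = (p l₁).natDegree + 1 := by simp [wt, hp₁]
          have : wt (p' l₁) ≤ (p' l₁).natDegree + 1 := by
            by_cases hz : p' l₁ = 0
            · simp [wt, hz]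
            · simp [wt, hz]
          omega
      have hstep : ∑ l ∈ Λ.erase l₀, wt (p' l) < ∑ l ∈ Λ.erase l₀, wt (p l) :=
        Finset.sum_lt_sum hwle ⟨l₁, hl₁, hwlt⟩
      obtain ⟨q, Cc, hC, hiff, hb⟩ := ih Λ p' l₀ hl₀ (by omega)
      have hane₀ : a ≠ Complex.exp (l₀ * (s:ℂ)) := (hs l₀ hl₀ hl₁ne.symm).symm
      refine ⟨q, Cc * (1 + ‖a‖), mul_nonneg hC (by positivity), ?_, ?_⟩
      · rw [hiff]
        constructor
        · intro h0
          by_contra hne0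
          exact (Tq_ne s a l₀ (p l₀) hane₀).2 hne0 h0
        · intro h0
          rw [hp'_def]; simp only [h0, Tq_zero]
      · intro M hM t
        have hb' : ∀ t : ℝ, ‖expP Λ p' t‖ ≤ (1 + ‖a‖) * M := by
          intro t'
          rw [hp'_def, expP_T]
          calc ‖expP Λ p (t' + s) - a * expP Λ p t'‖
              ≤ ‖expP Λ p (t' + s)‖ + ‖a * expP Λ p t'‖ := norm_sub_le _ _
            _ ≤ M + ‖a‖ * M := by
                rw [norm_mul]
                exact add_le_add (hM _)
                  (mul_le_mul_of_nonneg_left (hM _) (norm_nonneg a))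
            _ = (1 + ‖a‖) * M := by ring
        have := hb ((1 + ‖a‖) * M) hb' t
        calc ‖q.eval (t:ℂ) * Complex.exp (l₀ * t)‖ ≤ Cc * ((1 + ‖a‖) * M) := this
          _ = Cc * (1 + ‖a‖) * M := by ring

lemma const_bound (c l : ℂ) (M : ℝ) (hre : l.re ≠ 0)
    (h : ∀ t : ℝ, ‖c * Complex.exp (l * t)‖ ≤ M) : c = 0 := by
  by_contra hc
  have hM : 0 ≤ M := le_trans (norm_nonneg _) (h 0)
  have hcpos : 0 < ‖c‖ := norm_pos_iff.mpr hc
  set t : ℝ := (Real.log (M + 1) - Real.log ‖c‖) / l.re with ht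
  have hret : l.re * t = Real.log (M + 1) - Real.log ‖c‖ := by
    rw [ht, mul_div_cancel₀ _ hre]
  have hnorm : ‖Complex.exp (l * t)‖ = Real.exp (l.re * t) := by
    rw [Complex.norm_exp]
    congr 1
    simp [Complex.mul_re]
  have h2 := h t
  rw [norm_mul, hnorm, hret, Real.exp_sub, Real.exp_log (by linarith), Real.exp_log hcpos] at h2
  have heq : ‖c‖ * ((M + 1) / ‖c‖) = M + 1 := by
    rw [mul_comm, div_mul_cancel₀ _ (ne_of_gt hcpos)]
  rw [heq] at h2
  linarith

lemma single_term_zero (l : ℂ) (hre : l.re ≠ 0) :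
    ∀ (d : ℕ) (q : ℂ[X]), q.natDegree ≤ d → ∀ M : ℝ,
      (∀ t : ℝ, ‖q.eval (t:ℂ) * Complex.exp (l * t)‖ ≤ M) → q = 0 := by
  intro d
  induction d with
  | zero =>
    intro q hq M h
    have hqc : q = C (q.coeff 0) := eq_C_of_natDegree_le_zero hq
    have hcb : ∀ t : ℝ, ‖q.coeff 0 * Complex.exp (l * t)‖ ≤ M := by
      intro t
      have := h t
      rwa [hqc, eval_C] at this
    rw [hqc, const_bound (q.coeff 0) l M hre hcb, map_zero]
  | succ d ih =>
    intro q hq M h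
    by_cases hq' : q.natDegree ≤ d
    · exact ih q hq' M h
    push_neg at hq'
    have hq0 : q ≠ 0 := by
      intro h0
      rw [h0, natDegree_zero] at hq'
      omega
    set q' : ℂ[X] := q.comp (X + C 1) - q with hq'def
    by_cases hz : q' = 0
    · exfalso
      have hcomp : q.comp (X + C 1) = q := by
        have := sub_eq_zero.mp hz
        exact this
      have heval : ∀ k : ℕ, q.eval ((k : ℂ)) = q.eval 0 := by
        intro k
        induction k with
        | zero => norm_num
        | succ k ihk =>
          have h1 := congrArg (Polynomial.eval (k : ℂ)) hcomp
          rw [eval_comp, eval_add, eval_X, eval_C] at h1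
          push_cast
          rw [← ihk, ← h1]
      have hroots : {x : ℂ | (q - C (q.eval 0)).IsRoot x}.Infinite := by
        apply Set.infinite_of_injective_forall_mem (f := ((↑) : ℕ → ℂ)) Nat.cast_injective
        intro k
        simp [IsRoot, heval k]
      have hconst : q = C (q.eval 0) := by
        have := eq_zero_of_infinite_isRoot _ hroots
        exact sub_eq_zero.mp this
      have : q.natDegree = 0 := by rw [hconst]; exact natDegree_C _
      omega
    · have hcompne : q.comp (X + C 1) ≠ 0 := comp_linear_ne_zero hq0 1
      have hdeg : (q.comp (X + C 1)).degree = q.degree := by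
        rw [degree_eq_natDegree hcompne, degree_eq_natDegree hq0, natDegree_comp_linear]
      have hlt : q'.degree < q.degree := by
        have := degree_sub_lt hdeg hcompne (leadingCoeff_comp_linear q 1)
        rwa [hdeg] at this
      have hdle : q'.natDegree ≤ d := by
        have := natDegree_lt_natDegree hz hlt
        omega
      have hexp1 : Complex.exp (-l) * Complex.exp l = 1 := by
        rw [← Complex.exp_add]; simp
      have hb : ∀ t : ℝ, ‖q'.eval (t:ℂ) * Complex.exp (l * t)‖
          ≤ ‖Complex.exp (-l)‖ * M + M := by
        intro t
        have e1 : q'.eval (t:ℂ) * Complex.exp (l * t)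
            = Complex.exp (-l) * (q.eval (((t + 1 : ℝ)):ℂ) *
                Complex.exp (l * ((t + 1 : ℝ):ℂ))) - q.eval (t:ℂ) * Complex.exp (l * t) := by
          have hc1 : ((t + 1 : ℝ) : ℂ) = (t : ℂ) + 1 := by push_cast; ring
          rw [hc1, mul_add, Complex.exp_add, mul_one]
          simp only [hq'def, eval_sub, eval_comp, eval_add, eval_X, eval_C, sub_mul]
          have : Complex.exp (-l) * (q.eval ((t:ℂ) + 1) * (Complex.exp (l * t) * Complex.exp l))
              = q.eval ((t:ℂ) + 1) * Complex.exp (l * t) * (Complex.exp (-l) * Complex.exp l) := by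
            ring
          rw [this, hexp1, mul_one]
        rw [e1]
        calc ‖Complex.exp (-l) * (q.eval (((t + 1 : ℝ)):ℂ) * Complex.exp (l * ((t + 1 : ℝ):ℂ)))
              - q.eval (t:ℂ) * Complex.exp (l * t)‖
            ≤ ‖Complex.exp (-l) * (q.eval (((t + 1 : ℝ)):ℂ) * Complex.exp (l * ((t + 1 : ℝ):ℂ)))‖
              + ‖q.eval (t:ℂ) * Complex.exp (l * t)‖ := norm_sub_le _ _
          _ ≤ ‖Complex.exp (-l)‖ * M + M := by
              rw [norm_mul]
              exact add_le_add
                (mul_le_mul_of_nonneg_left (h _) (norm_nonneg _)) (h t)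
      exact absurd (ih q' hdle _ hb) hz

lemma expP_re_zero (Λ : Finset ℂ) (p : ℂ → ℂ[X]) (M : ℝ)
    (h : ∀ t : ℝ, ‖expP Λ p t‖ ≤ M) :
    ∀ l ∈ Λ, l.re ≠ 0 → p l = 0 := by
  intro l hl hre
  obtain ⟨q, Cc, hC, hiff, hb⟩ := isolate _ Λ p l hl le_rfl
  exact hiff.mp (single_term_zero l hre q.natDegree q le_rfl (Cc * M) (hb M h))

lemma expP_all_zero (Λ : Finset ℂ) (p : ℂ → ℂ[X])
    (h : ∀ t : ℝ, expP Λ p t = 0) : ∀ l ∈ Λ, p l = 0 := by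
  intro l hl
  obtain ⟨q, Cc, hC, hiff, hb⟩ := isolate _ Λ p l hl le_rfl
  have hq0 : ∀ t : ℝ, q.eval (t:ℂ) = 0 := by
    intro t
    have hb0 := hb 0 (fun t' => by rw [h t']; simp) t
    rw [mul_zero] at hb0
    have : q.eval (t:ℂ) * Complex.exp (l * t) = 0 :=
      norm_le_zero_iff.mp hb0
    rcases mul_eq_zero.mp this with h' | h'
    · exact h'
    · exact absurd h' (Complex.exp_ne_zero _)
  apply hiff.mp
  apply eq_zero_of_infinite_isRoot
  apply Set.infinite_of_injective_forall_mem (f := ((↑) : ℝ → ℂ)) Complex.ofReal_injective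
  intro t
  exact hq0 t

abbrev RB := AddMonoidAlgebra ℂ[X] ℂ

def coeffHom : ℂ[X] →ₐ[ℂ] (ℝ → ℂ) := Polynomial.aeval (fun t : ℝ => (t : ℂ))

lemma coeffHom_apply (p : ℂ[X]) (t : ℝ) : coeffHom p t = p.eval (t : ℂ) := by
  have h := Polynomial.hom_eval₂ p (algebraMap ℂ (ℝ → ℂ))
      (Pi.evalRingHom (fun _ : ℝ => ℂ) t) (fun t : ℝ => (t : ℂ))
  have h2 : (Pi.evalRingHom (fun _ : ℝ => ℂ) t).comp (algebraMap ℂ (ℝ → ℂ)) =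
      RingHom.id ℂ := RingHom.ext fun c => rfl
  rw [h2] at h
  have h3 : coeffHom p t = (Pi.evalRingHom (fun _ : ℝ => ℂ) t)
      (Polynomial.eval₂ (algebraMap ℂ (ℝ → ℂ)) (fun t : ℝ => (t : ℂ)) p) := rfl
  rw [h3, h]
  rfl

def expHom : Multiplicative ℂ →* (ℝ → ℂ) where
  toFun z := fun t : ℝ => Complex.exp (Multiplicative.toAdd z * t)
  map_one' := by funext t; simp
  map_mul' z w := by
    funext t
    show Complex.exp (Multiplicative.toAdd (z * w) * t) = _
    rw [toAdd_mul, add_mul, Complex.exp_add]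
    rfl

def Θa : RB →ₐ[ℂ] (ℝ → ℂ) :=
  AddMonoidAlgebra.liftNCAlgHom coeffHom expHom (fun _ _ => Commute.all _ _)

lemma Θa_single (l : ℂ) (p : ℂ[X]) :
    Θa (AddMonoidAlgebra.single l p) = fun t : ℝ => p.eval (t : ℂ) * Complex.exp (l * t) := by
  funext t
  have h : Θa (AddMonoidAlgebra.single l p)
      = coeffHom p * expHom (Multiplicative.ofAdd l) :=
    AddMonoidAlgebra.liftNC_single _ _ _ _
  rw [h]
  show coeffHom p t * expHom (Multiplicative.ofAdd l) t = _
  rw [coeffHom_apply]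
  rfl

lemma Θa_apply (r : RB) (t : ℝ) :
    Θa r t = ∑ l ∈ r.coeff.support, (r.coeff l).eval (t : ℂ) * Complex.exp (l * t) := by
  conv_lhs => rw [← AddMonoidAlgebra.sum_coeff_single r]
  rw [map_finsuppSum, Finsupp.sum]
  simp only [Finset.sum_apply]
  exact Finset.sum_congr rfl fun l _ => by rw [Θa_single]

lemma Θa_inj : Function.Injective Θa := by
  intro r r' hrr
  have h0 : Θa (r - r') = 0 := by rw [map_sub, hrr, sub_self]
  have hz : ∀ l ∈ (r - r').coeff.support, (r - r').coeff l = 0 := by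
    apply expP_all_zero
    intro t
    have := congrFun h0 t
    rw [Θa_apply] at this
    exact this
  have : r - r' = 0 := by
    refine AddMonoidAlgebra.ext (Finsupp.ext fun l => ?_)
    by_cases hl : l ∈ (r - r').coeff.support
    · rw [hz l hl]; rfl
    · rw [Finsupp.notMem_support_iff.mp hl]; rfl
  exact sub_eq_zero.mp this

def χhom (L : ℝ →ₗ[ℚ] ℂ) : Multiplicative ℂ →* ℂ where
  toFun z := Complex.exp (L (Multiplicative.toAdd z).re)
  map_one' := by
    show Complex.exp (L (Multiplicative.toAdd (1 : Multiplicative ℂ)).re) = 1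
    have : (Multiplicative.toAdd (1 : Multiplicative ℂ)) = 0 := rfl
    rw [this]
    simp
  map_mul' z w := by
    show Complex.exp (L (Multiplicative.toAdd (z * w)).re) = _
    rw [toAdd_mul, Complex.add_re, map_add, Complex.exp_add]

def φR (L : ℝ →ₗ[ℚ] ℂ) : RB →+* ℂ :=
  AddMonoidAlgebra.liftNCRingHom (Polynomial.evalRingHom (0 : ℂ)) (χhom L)
    (fun _ _ => Commute.all _ _)

lemma φR_single (L : ℝ →ₗ[ℚ] ℂ) (l : ℂ) (p : ℂ[X]) :
    φR L (AddMonoidAlgebra.single l p) = p.eval 0 * Complex.exp (L l.re) := by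
  have h : φR L (AddMonoidAlgebra.single l p)
      = (Polynomial.evalRingHom (0 : ℂ)) p * (χhom L) (Multiplicative.ofAdd l) :=
    AddMonoidAlgebra.liftNC_single _ _ _ _
  rw [h]
  rfl

lemma φR_apply (L : ℝ →ₗ[ℚ] ℂ) (r : RB) :
    φR L r = ∑ l ∈ r.coeff.support, (r.coeff l).eval 0 * Complex.exp (L l.re) := by
  conv_lhs => rw [← AddMonoidAlgebra.sum_coeff_single r]
  rw [map_finsuppSum, Finsupp.sum]
  exact Finset.sum_congr rfl fun l _ => by rw [φR_single]

lemma exists_indep_powers (n : ℕ) :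
    ∃ v : Fin n → ℝ, LinearIndependent ℚ v := by
  have hLiou : Liouville (liouvilleNumber 3) := liouville_liouvilleNumber (by norm_num)
  have htZ : Transcendental ℤ (liouvilleNumber 3) := hLiou.transcendental
  have htQ : Transcendental ℚ (liouvilleNumber 3) := by
    intro halg
    exact htZ ((IsFractionRing.isAlgebraic_iff ℤ ℚ ℝ).mpr halg)
  set x : ℝ := liouvilleNumber 3
  refine ⟨fun j => x ^ ((j : ℕ) + 1), ?_⟩
  rw [Fintype.linearIndependent_iff]
  intro c hc
  by_contra hne
  push_neg at hne
  obtain ⟨j₀, hj₀⟩ := hne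
  set P : Polynomial ℚ := ∑ j : Fin n, Polynomial.C (c j) * Polynomial.X ^ ((j : ℕ) + 1) with hP
  have hPne : P ≠ 0 := by
    intro h0
    apply hj₀
    have hco := congrArg (fun p => Polynomial.coeff p ((j₀ : ℕ) + 1)) h0
    simp only [hP, Polynomial.finset_sum_coeff, Polynomial.coeff_C_mul,
      Polynomial.coeff_X_pow, Polynomial.coeff_zero] at hco
    rw [Finset.sum_eq_single j₀] at hco
    · simpa using hco
    · intro b _ hbne
      have hne2 : ¬ ((j₀ : ℕ) + 1 = (b : ℕ) + 1) := by
        have hbne' : (b : ℕ) ≠ (j₀ : ℕ) := fun h => hbne (Fin.ext h)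
        omega
      rw [if_neg hne2, mul_zero]
    · intro hmem
      exact absurd (Finset.mem_univ j₀) hmem
  have haev : Polynomial.aeval x P = 0 := by
    rw [hP, map_sum]
    rw [← hc]
    refine Finset.sum_congr rfl fun j _ => ?_
    rw [map_mul, Polynomial.aeval_C, map_pow, Polynomial.aeval_X, Rat.smul_def]
    norm_num
  exact htQ ⟨P, hPne, haev⟩

lemma exists_L {n : ℕ} (v : Fin n → ℝ) (hv : LinearIndependent ℚ v) (u : Fin n → ℂ) :
    ∃ L : ℝ →ₗ[ℚ] ℂ, ∀ j, L (v j) = u j := by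
  classical
  have hs : LinearIndepOn ℚ id (Set.range v) := (linearIndepOn_id_range_iff hv.injective).mpr hv
  let B := Module.Basis.extend hs
  let val : hs.extend (Set.subset_univ _) → ℂ :=
    fun b => if h : ∃ j, v j = (b : ℝ) then u h.choose else 0
  refine ⟨B.constr ℚ val, fun j => ?_⟩
  have hmem : v j ∈ hs.extend (Set.subset_univ _) :=
    hs.subset_extend _ ⟨j, rfl⟩
  have hb : B ⟨v j, hmem⟩ = v j := Module.Basis.extend_apply_self hs ⟨v j, hmem⟩
  have hcb := B.constr_basis ℚ val ⟨v j, hmem⟩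
  rw [hb] at hcb
  rw [hcb]
  have hex : ∃ j', v j' = ((⟨v j, hmem⟩ : hs.extend (Set.subset_univ _)) : ℝ) := ⟨j, rfl⟩
  show (if h : ∃ j', v j' = ((⟨v j, hmem⟩ : hs.extend (Set.subset_univ _)) : ℝ)
      then u h.choose else 0) = u j
  rw [dif_pos hex]
  congr 1
  exact hv.injective hex.choose_spec

lemma Bohl_le_range : Bohl ≤ Θa.range := by
  apply Algebra.adjoin_le
  rintro g ⟨k, l, rfl⟩
  refine ⟨AddMonoidAlgebra.single l (X ^ k), ?_⟩
  show Θa (AddMonoidAlgebra.single l (X ^ k)) = _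
  rw [Θa_single]
  funext t
  simp

theorem tsr_Bohl_infinite (n : ℕ) (hn : 0 < n) :
    ∃ f : Fin n → ℝ → ℂ, (∀ j, f j ∈ Bohl) ∧
      ∃ ε : ℝ, 0 < ε ∧
        ∀ g : Fin n → ℝ → ℂ, (∀ j, g j ∈ Bohl) →
          (∃ x : Fin n → ℝ → ℂ, (∀ j, x j ∈ Bohl) ∧ (∑ j, x j * g j) = 1) →
          ∃ j, ENNReal.ofReal ε ≤ ⨆ t : ℝ, (‖f j t - g j t‖₊ : ℝ≥0∞) := by
  classical
  obtain ⟨v, hv⟩ := exists_indep_powers n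
  set f : Fin n → ℝ → ℂ := fun j t => Complex.exp ((v j : ℂ) * t) - 2 with hf
  refine ⟨f, ?_, 1, one_pos, ?_⟩
  · intro j
    have h1 : (fun t : ℝ => Complex.exp ((v j : ℂ) * t)) ∈ Bohl :=
      Algebra.subset_adjoin ⟨0, (v j : ℂ), by funext t; simp⟩
    have h2 : (fun _ : ℝ => (2 : ℂ)) ∈ Bohl := by
      have h3 : (fun _ : ℝ => (2 : ℂ)) = algebraMap ℂ (ℝ → ℂ) 2 := rfl
      rw [h3]
      exact Bohl.algebraMap_mem 2
    exact Subalgebra.sub_mem Bohl h1 h2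
  · rintro g hg ⟨xx, hxx, hsum⟩
    by_contra hcon
    push_neg at hcon
    have hpt : ∀ j (t : ℝ), ‖g j t - f j t‖ < 1 := by
      intro j t
      have h1 : (‖f j t - g j t‖₊ : ℝ≥0∞) ≤ ⨆ t : ℝ, (‖f j t - g j t‖₊ : ℝ≥0∞) :=
        le_iSup (fun t : ℝ => (‖f j t - g j t‖₊ : ℝ≥0∞)) t
      have h2 := lt_of_le_of_lt h1 (hcon j)
      rw [ENNReal.ofReal_one, ← ENNReal.coe_one, ENNReal.coe_lt_coe] at h2
      have h3 : ‖f j t - g j t‖ < 1 := by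
        rw [← coe_nnnorm]
        exact_mod_cast h2
      rw [norm_sub_rev] at h3
      exact h3
    have hGex : ∀ j, ∃ G : RB, Θa G = g j := fun j =>
      (AlgHom.mem_range Θa).mp (Bohl_le_range (hg j))
    choose G hG using hGex
    have hXex : ∀ j, ∃ Xr : RB, Θa Xr = xx j := fun j =>
      (AlgHom.mem_range Θa).mp (Bohl_le_range (hxx j))
    choose Xr hXr using hXex
    set r : Fin n → RB := fun j =>
      G j - AddMonoidAlgebra.single ((v j : ℂ)) (1 : ℂ[X])
        + AddMonoidAlgebra.single (0 : ℂ) (Polynomial.C 2) with hrdef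
    have hΘr : ∀ j, Θa (r j) = fun t => g j t - f j t := by
      intro j
      have h5 : Θa (r j)
          = Θa (G j) - Θa (AddMonoidAlgebra.single ((v j : ℂ)) (1 : ℂ[X]))
            + Θa (AddMonoidAlgebra.single (0 : ℂ) (Polynomial.C 2)) := by
        rw [hrdef]
        rw [map_add, map_sub]
      rw [h5, hG j, Θa_single, Θa_single]
      funext t
      simp only [Pi.add_apply, Pi.sub_apply, Polynomial.eval_one, Polynomial.eval_C,
        one_mul, zero_mul, Complex.exp_zero, mul_one, hf]
      ring
    have hre0 : ∀ j, ∀ l ∈ (r j).coeff.support, l.re = 0 := by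
      intro j
      have hb : ∀ t : ℝ, ‖expP (r j).coeff.support (fun l => (r j).coeff l) t‖ ≤ 1 := by
        intro t
        have h6 : expP (r j).coeff.support (fun l => (r j).coeff l) t = g j t - f j t := by
          rw [expP, ← Θa_apply, hΘr j]
        rw [h6]
        exact le_of_lt (hpt j t)
      intro l hl
      by_contra hre
      exact (Finsupp.mem_support_iff.mp hl)
        (expP_re_zero (r j).coeff.support (fun l => (r j).coeff l) 1 hb l hl hre)
    set w : Fin n → ℂ := fun j => 2 - (g j 0 - f j 0) with hw
    have hwne : ∀ j, w j ≠ 0 := by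
      intro j h0
      have h1 : ‖g j 0 - f j 0‖ < 1 := hpt j 0
      have h2 : g j 0 - f j 0 = 2 := by
        have := sub_eq_zero.mp h0
        exact this.symm
      rw [h2] at h1
      norm_num at h1
    obtain ⟨L, hL⟩ := exists_L v hv (fun j => Complex.log (w j))
    have hχv : ∀ j, Complex.exp (L ((v j : ℂ)).re) = w j := by
      intro j
      rw [Complex.ofReal_re, hL j, Complex.exp_log (hwne j)]
    have hφG : ∀ j, φR L (G j) = 0 := by
      intro j
      have hGr : G j = r j + AddMonoidAlgebra.single ((v j : ℂ)) (1 : ℂ[X])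
          - AddMonoidAlgebra.single (0 : ℂ) (Polynomial.C 2) := by
        rw [hrdef]
        ring
      have hφr : φR L (r j) = g j 0 - f j 0 := by
        have h7 : Θa (r j) 0 = g j 0 - f j 0 := by rw [hΘr j]
        rw [φR_apply, ← h7, Θa_apply]
        refine Finset.sum_congr rfl fun l hl => ?_
        rw [hre0 j l hl]
        simp
      rw [hGr, map_sub, map_add, φR_single, φR_single, hφr, hχv j]
      simp only [Polynomial.eval_one, Polynomial.eval_C, one_mul, Complex.zero_re,
        map_zero, Complex.exp_zero, mul_one, hw]
      ring
    have hone : (∑ j, Xr j * G j) = (1 : RB) := by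
      apply Θa_inj
      rw [map_sum, map_one]
      calc ∑ j, Θa (Xr j * G j) = ∑ j, xx j * g j := by
            refine Finset.sum_congr rfl fun j _ => ?_
            rw [map_mul, hXr, hG]
        _ = 1 := hsum
    have hφ1 := congrArg (φR L) hone
    rw [map_sum, map_one] at hφ1
    rw [Finset.sum_eq_zero (fun j _ => by rw [map_mul, hφG j, mul_zero])] at hφ1
    exact zero_ne_one hφ1
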